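/- In the setting of the θ-friend/θ-dense decomposition with 0 < θ < 1/20, for any vertex v in a connected component C of H_θ, the number of θ-dense vertices adjacent to v in G that lie outside C is at most 2θ·deg(v). -/
import Mathlib


/-- In the θ-friend/θ-dense decomposition (0 < θ < 1/20), for a vertex
`v` in a connected component `C` of `H_θ`, the number of θ-dense vertices adjacent
to `v` in `G` lying outside `C` is at most `2θ·deg v`. -/
theorem stmt_1 {V : Type*} [Fintype V] (G : SimpleGraph V) (θ : ℝ)
    (hθ0 : 0 < θ) (hθ1 : θ < 1 / 20)
    (deg : V → ℝ) (hdeg : ∀ v, deg v = ((G.neighborSet v).ncard : ℝ))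
    (friend : V → V → Prop)
    (hfriend : ∀ u v, friend u v ↔ G.Adj u v ∧
        (1 - θ) * max (deg u) (deg v) ≤ min (deg u) (deg v) ∧
        (1 - θ) * min (deg u) (deg v) ≤ ((G.neighborSet u ∩ G.neighborSet v).ncard : ℝ))
    (dens : V → Prop)
    (hdens : ∀ v, dens v ↔ (1 - θ) * deg v ≤ (({u | friend v u}).ncard : ℝ))
    (v : V) (hv : dens v) :
    (({u | G.Adj v u ∧ dens u ∧
        ¬ Relation.ReflTransGen (fun a b => friend a b ∧ dens a ∧ dens b) v u}).ncard : ℝ)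
      ≤ 2 * θ * deg v := by
  classical
  set F : Set V := {u | friend v u} with hF
  set N : Set V := G.neighborSet v with hN
  have hFN : F ⊆ N := by
    intro u hu
    exact ((hfriend v u).1 hu).1
  have hsub : {u | G.Adj v u ∧ dens u ∧
      ¬ Relation.ReflTransGen (fun a b => friend a b ∧ dens a ∧ dens b) v u} ⊆ N \ F := by
    rintro u ⟨hadj, hdu, hnr⟩
    refine ⟨hadj, fun hf => hnr (Relation.ReflTransGen.single ⟨hf, hv, hdu⟩)⟩
  have hle : ({u | G.Adj v u ∧ dens u ∧
      ¬ Relation.ReflTransGen (fun a b => friend a b ∧ dens a ∧ dens b) v u}).ncard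
      ≤ (N \ F).ncard := Set.ncard_le_ncard hsub (Set.toFinite _)
  have hdiff : (N \ F).ncard = N.ncard - F.ncard := Set.ncard_diff hFN
  have hcard_le : F.ncard ≤ N.ncard := Set.ncard_le_ncard hFN (Set.toFinite _)
  have hFbig : (1 - θ) * deg v ≤ (F.ncard : ℝ) := (hdens v).1 hv
  have hNd : deg v = (N.ncard : ℝ) := hdeg v
  have hdegpos : (0:ℝ) ≤ deg v := by
    rw [hNd]; positivity
  have hcast : ((N \ F).ncard : ℝ) = (N.ncard : ℝ) - (F.ncard : ℝ) := by
    rw [hdiff, Nat.cast_sub hcard_le]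
  have h1 : (({u | G.Adj v u ∧ dens u ∧
      ¬ Relation.ReflTransGen (fun a b => friend a b ∧ dens a ∧ dens b) v u}).ncard : ℝ)
      ≤ ((N \ F).ncard : ℝ) := by exact_mod_cast hle
  nlinarith [h1, hcast, hFbig, hNd, hdegpos, hθ0]
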